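/- For a positive function V in H^{3/2}(T), the operator A[V](w) := V w - (V/P_0(V)) P_0(V w), acting on mean-zero functions, is a two-sided inverse of the operator w ↦ (1-P_0)(V^{-1} w) on mean-zero functions. -/

import Mathlib

/-- The mean `P₀ g = (1/2π) ∫₀^{2π} g` of a `2π`-periodic function. -/
noncomputable def meanT (g : ℝ → ℝ) : ℝ :=
  (1 / (2 * Real.pi)) * ∫ x in (0:ℝ)..(2 * Real.pi), g x

/-- The operator `A[V] w = V w - (V / P₀(V)) P₀(V w)`. -/
noncomputable def Aop (V w : ℝ → ℝ) : ℝ → ℝ :=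
  fun x => V x * w x - (V x / meanT V) * meanT (fun y => V y * w y)

lemma meanT_sub_const (f : ℝ → ℝ)
    (hf : IntervalIntegrable f MeasureTheory.volume 0 (2 * Real.pi)) (c : ℝ) :
    meanT (fun x => f x - c) = meanT f - c := by
  unfold meanT
  rw [intervalIntegral.integral_sub hf intervalIntegrable_const,
    intervalIntegral.integral_const]
  have hπ : Real.pi ≠ 0 := Real.pi_ne_zero
  field_simp
  simp

/-- For a positive periodic `V` (in `H^{3/2}(𝕋)`, in particular continuous), the operator
`A[V]` is a two-sided inverse of `w ↦ (1 - P₀)(V⁻¹ w)` on mean-zero functions. -/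
theorem Aop_inverts_one_sub_mean_inv_mul
    (V : ℝ → ℝ) (hV : Continuous V)
    (hVper : ∀ x, V (x + 2 * Real.pi) = V x)
    (hVpos : ∀ x, 0 < V x)
    (w : ℝ → ℝ) (hw : Continuous w)
    (hwper : ∀ x, w (x + 2 * Real.pi) = w x)
    (hwmean : meanT w = 0) :
    (∀ x, Aop V (fun y => w y / V y - meanT (fun z => w z / V z)) x = w x) ∧
    (∀ x, Aop V w x / V x - meanT (fun y => Aop V w y / V y) = w x) := by
  have hπ : (0:ℝ) < 2 * Real.pi := by positivity
  have hmV : 0 < meanT V := by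
    unfold meanT
    have hint : 0 < ∫ x in (0:ℝ)..(2 * Real.pi), V x :=
      intervalIntegral.intervalIntegral_pos_of_pos_on
        (hV.intervalIntegrable _ _) (fun x _ => hVpos x) hπ
    positivity
  have hVne : ∀ x, V x ≠ 0 := fun x => (hVpos x).ne'
  constructor
  · intro x
    set c := meanT (fun z => w z / V z) with hc
    have hfun : (fun y => V y * (w y / V y - c)) = fun y => w y - c * V y := by
      funext y
      field_simp [hVne y]
    have hm : meanT (fun y => V y * (w y / V y - c)) = meanT w - c * meanT V := by
      rw [hfun]
      unfold meanT
      rw [intervalIntegral.integral_sub (hw.intervalIntegrable _ _)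
        ((hV.intervalIntegrable _ _).const_mul c),
        intervalIntegral.integral_const_mul]
      ring
    simp only [Aop]
    rw [hm, hwmean]
    field_simp [hVne x, hmV.ne']
    ring
  · intro x
    set K := meanT (fun y => V y * w y) with hK
    have hfun : (fun y => Aop V w y / V y) = fun y => w y - K / meanT V := by
      funext y
      simp only [Aop, ← hK]
      field_simp [hVne y, hmV.ne']
    have hm : meanT (fun y => Aop V w y / V y) = meanT w - K / meanT V := by
      rw [hfun, meanT_sub_const w (hw.intervalIntegrable _ _)]
    rw [hm, hwmean]
    simp only [Aop, ← hK]
    field_simp [hVne x, hmV.ne']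
    ring
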